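/- Let D = {z ∈ ℂ : |z| < 1} be the open unit disk and fix κ with 0 < κ < 1. Let u : D → ℝ be a bounded continuous function such that for every z ∈ D there exists ρ(z) with 0 < ρ(z) ≤ κ·(1−|z|) and u(z) = (1/2π)∫₀^{2π} u(z + ρ(z)e^{iθ}) dθ. For z ∈ D, let 𝓕_z be the set of pairs (x,r) with x ∈ D, 0 < r ≤ κ·(1−|x|), |z − x| < r, and u(x) = (1/2π)∫₀^{2π} u(x + re^{iθ}) dθ, and define v(z) := sup over (x,r) ∈ 𝓕_z of h_{x,r}(z), where h_{x,r}(z) = (1/2π)∫₀^{2π} u(x + re^{iθ})·(r² − |z − x|²)/|x + re^{iθ} − z|² dθ is the harmonic extension of u to the disk B(x,r). Then: (a) for every z ∈ D the supremum is attained, i.e., there exists (x,r) ∈ 𝓕_z with v(z) = h_{x,r}(z); (b) u(z) ≤ v(z) for all z ∈ D; (c) v is bounded on D; (d) v is continuous on D; and (e) v satisfies the sub-mean value property: v(z) ≤ (1/2π)∫₀^{2π} v(z + se^{iθ}) dθ whenever the closed disk of center z and radius s is contained in D. -/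

import Mathlib

open MeasureTheory Metric Complex Filter

/-- The average of `u` over the circle of center `z` and radius `r`
(with respect to the uniform probability measure on the circle). -/
noncomputable def circleAvg (u : ℂ → ℝ) (z : ℂ) (r : ℝ) : ℝ :=
  (2 * Real.pi)⁻¹ * ∫ θ in (0:ℝ)..(2 * Real.pi), u (z + r * Complex.exp (θ * Complex.I))

/-- The open unit disk in `ℂ`. -/
def unitDisk : Set ℂ := Metric.ball 0 1

/-- The harmonic extension (Poisson integral) of `u` to the disk `B(x,r)`,
evaluated at `z`:
`h_{x,r}(z) = (1/2π)∫₀^{2π} u(x+re^{iθ})·(r²-|z-x|²)/|x+re^{iθ}-z|² dθ`. -/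
noncomputable def harmExt (u : ℂ → ℝ) (x : ℂ) (r : ℝ) (z : ℂ) : ℝ :=
  (2 * Real.pi)⁻¹ * ∫ θ in (0:ℝ)..(2 * Real.pi),
    u (x + r * Complex.exp (θ * Complex.I)) *
      ((r ^ 2 - ‖z - x‖ ^ 2) /
        ‖x + r * Complex.exp (θ * Complex.I) - z‖ ^ 2)

/-- The family `𝓕_z` of admissible pairs `(x,r)`: `x ∈ D`, `0 < r ≤ κ(1-|x|)`,
`z ∈ B(x,r)`, and `u(x)` equals the mean value of `u` on `∂B(x,r)`. -/
def admissiblePairs (u : ℂ → ℝ) (κ : ℝ) (z : ℂ) : Set (ℂ × ℝ) :=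
  {p | p.1 ∈ unitDisk ∧ 0 < p.2 ∧ p.2 ≤ κ * (1 - ‖p.1‖) ∧
    ‖z - p.1‖ < p.2 ∧ u p.1 = circleAvg u p.1 p.2}

/-- The auxiliary subharmonic function
`v(z) = sup { h_{x,r}(z) : (x,r) ∈ 𝓕_z }`. -/
noncomputable def vFun (u : ℂ → ℝ) (κ : ℝ) (z : ℂ) : ℝ :=
  sSup ((fun p : ℂ × ℝ => harmExt u p.1 p.2 z) '' admissiblePairs u κ z)

open Topology

namespace RMVP

variable {x z : ℂ} {r : ℝ} {u f : ℂ → ℝ}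

lemma integral_circleMap_inv (hz : z ∈ ball x r) :
    (∫ θ in (0:ℝ)..(2*Real.pi), (circleMap x r θ - z)⁻¹) = 0 := by
  have hr : 0 < r := lt_of_le_of_lt dist_nonneg (mem_ball.1 hz)
  rcases eq_or_ne z x with rfl | hzx
  · have he : ∀ θ : ℝ, (circleMap z r θ - z)⁻¹ = (r:ℂ)⁻¹ * Complex.exp ((-I) * θ) := by
      intro θ
      rw [circleMap_sub_center, circleMap_zero, mul_inv, ← Complex.exp_neg]
      ring_nf
    rw [intervalIntegral.integral_congr (fun θ _ => he θ),
      intervalIntegral.integral_const_mul, integral_exp_mul_complex (by simp [I_ne_zero])]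
    have : (-I) * (2 * Real.pi : ℝ) = -(2 * Real.pi * I) := by push_cast; ring
    rw [this, Complex.exp_neg, Complex.exp_two_pi_mul_I]
    simp
  · -- partial fraction trick
    have hx0 : x ∈ ball x r := mem_ball_self hr
    have h1 : (∮ w in C(x, r), (w - x)⁻¹) = 2 * Real.pi * I :=
      circleIntegral.integral_sub_inv_of_mem_ball hx0
    have h2 : (∮ w in C(x, r), (w - z)⁻¹) = 2 * Real.pi * I :=
      circleIntegral.integral_sub_inv_of_mem_ball hz
    have hi1 : CircleIntegrable (fun w => (w - x)⁻¹) x r := by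
      by_contra h
      rw [circleIntegral.integral_undef h] at h1
      exact (by simp [Real.pi_ne_zero, I_ne_zero] : (2 * Real.pi * I : ℂ) ≠ 0) h1.symm
    have hi2 : CircleIntegrable (fun w => (w - z)⁻¹) x r := by
      by_contra h
      rw [circleIntegral.integral_undef h] at h2
      exact (by simp [Real.pi_ne_zero, I_ne_zero] : (2 * Real.pi * I : ℂ) ≠ 0) h2.symm
    have key : (∮ w in C(x, r), (x - z)⁻¹ • ((w - x)⁻¹ - (w - z)⁻¹)) = 0 := by
      rw [circleIntegral.integral_smul, circleIntegral.integral_sub hi1 hi2, h1, h2]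
      simp
    have heq : Set.EqOn (fun w : ℂ => ((w - z) * (w - x))⁻¹)
        (fun w : ℂ => (x - z)⁻¹ • ((w - x)⁻¹ - (w - z)⁻¹)) (sphere x r) := by
      intro w hw
      have hwsph := mem_sphere.1 hw
      have hwx : w ≠ x := by intro h; rw [h, dist_self] at hwsph; exact hr.ne hwsph
      have hwz : w ≠ z := by intro h; rw [h] at hwsph; exact (mem_ball.1 hz).ne hwsph
      have h3 : w - x ≠ 0 := sub_ne_zero.2 hwx
      have h4 : w - z ≠ 0 := sub_ne_zero.2 hwz
      have h5 : x - z ≠ 0 := sub_ne_zero.2 hzx.symm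
      show ((w - z) * (w - x))⁻¹ = (x - z)⁻¹ • ((w - x)⁻¹ - (w - z)⁻¹)
      rw [smul_eq_mul]
      field_simp
      ring
    have hzero : (∮ w in C(x, r), ((w - z) * (w - x))⁻¹) = 0 := by
      rw [circleIntegral.integral_congr hr.le heq, key]
    -- unfold circleIntegral
    have hunfold : (∮ w in C(x, r), ((w - z) * (w - x))⁻¹) =
        ∫ θ in (0:ℝ)..(2*Real.pi), I * (circleMap x r θ - z)⁻¹ := by
      rw [circleIntegral]
      apply intervalIntegral.integral_congr
      intro θ _
      have h6 : circleMap 0 r θ ≠ 0 := circleMap_ne_center hr.ne'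
      show deriv (circleMap x r) θ • ((circleMap x r θ - z) * (circleMap x r θ - x))⁻¹ =
        I * (circleMap x r θ - z)⁻¹
      rw [deriv_circleMap]
      have h7 : circleMap x r θ - x = circleMap 0 r θ := circleMap_sub_center x r θ
      have h8 : circleMap x r θ - z ≠ 0 := sub_ne_zero.2 (circleMap_ne_mem_ball hz θ)
      rw [smul_eq_mul, h7]
      field_simp
    rw [hunfold, intervalIntegral.integral_const_mul] at hzero
    exact (mul_eq_zero.1 hzero).resolve_left I_ne_zero

noncomputable def ker (x : ℂ) (r : ℝ) (z : ℂ) (θ : ℝ) : ℝ :=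
  (r ^ 2 - ‖z - x‖ ^ 2) / ‖circleMap x r θ - z‖ ^ 2

lemma harmExt_eq (u : ℂ → ℝ) (x : ℂ) (r : ℝ) (z : ℂ) :
    harmExt u x r z = (2 * Real.pi)⁻¹ * ∫ θ in (0:ℝ)..(2 * Real.pi),
      u (circleMap x r θ) * ker x r z θ := rfl

lemma circleAvg_eq (u : ℂ → ℝ) (x : ℂ) (r : ℝ) :
    circleAvg u x r = (2 * Real.pi)⁻¹ * ∫ θ in (0:ℝ)..(2 * Real.pi), u (circleMap x r θ) := rfl

lemma abs_circleMap_sub_center (x : ℂ) {r : ℝ} (hr : 0 ≤ r) (θ : ℝ) :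
    ‖circleMap x r θ - x‖ = r := by
  rw [circleMap_sub_center, norm_circleMap_zero, _root_.abs_of_nonneg hr]

lemma le_abs_circleMap_sub (x z : ℂ) {r : ℝ} (hr : 0 ≤ r) (θ : ℝ) :
    r - ‖z - x‖ ≤ ‖circleMap x r θ - z‖ := by
  have h := norm_add_le (circleMap x r θ - z) (z - x)
  have e : circleMap x r θ - z + (z - x) = circleMap x r θ - x := by ring
  rw [e, abs_circleMap_sub_center x hr] at h
  linarith [h]

lemma abs_circleMap_sub_le (x z : ℂ) {r : ℝ} (hr : 0 ≤ r) (θ : ℝ) :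
    ‖circleMap x r θ - z‖ ≤ r + ‖z - x‖ := by
  have h := norm_add_le (circleMap x r θ - x) (x - z)
  have e1 : circleMap x r θ - x + (x - z) = circleMap x r θ - z := by ring
  rw [e1, abs_circleMap_sub_center x hr] at h
  simpa [norm_sub_rev x z] using h

lemma abs_circleMap_sub_pos {x z : ℂ} {r : ℝ} (h : ‖z - x‖ < r) (θ : ℝ) :
    0 < ‖circleMap x r θ - z‖ := by
  have h0 : (0:ℝ) ≤ ‖z - x‖ := norm_nonneg _
  have := le_abs_circleMap_sub x z (by linarith) θ
  linarith

lemma ker_nonneg {x z : ℂ} {r : ℝ} (h : ‖z - x‖ < r) (θ : ℝ) :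
    0 ≤ ker x r z θ := by
  have h0 : (0:ℝ) ≤ ‖z - x‖ := norm_nonneg _
  apply div_nonneg
  · nlinarith
  · positivity

lemma ker_le {x z : ℂ} {r : ℝ} (h : ‖z - x‖ < r) (θ : ℝ) :
    ker x r z θ ≤ (r + ‖z - x‖) / (r - ‖z - x‖) := by
  have h0 : (0:ℝ) ≤ ‖z - x‖ := norm_nonneg _
  set ρ := ‖z - x‖
  have hden := le_abs_circleMap_sub x z (by linarith) θ
  have hpos := abs_circleMap_sub_pos h θ
  rw [ker, div_le_div_iff₀ (by positivity) (by linarith)]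
  have h2 : (r - ρ)^2 ≤ ‖circleMap x r θ - z‖^2 := by nlinarith
  nlinarith [h2]

lemma ker_le_far {x z : ℂ} {r δ : ℝ} (h : ‖z - x‖ < r) (hδ : 0 < δ) {θ : ℝ}
    (hfar : δ ≤ ‖circleMap x r θ - z‖) :
    ker x r z θ ≤ (r ^ 2 - ‖z - x‖ ^ 2) / δ ^ 2 := by
  have h0 : (0:ℝ) ≤ ‖z - x‖ := norm_nonneg _
  apply div_le_div_of_nonneg_left (by nlinarith) (by positivity)
  nlinarith

lemma continuous_ker {x z : ℂ} {r : ℝ} (h : ‖z - x‖ < r) :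
    Continuous (ker x r z) := by
  apply Continuous.div continuous_const
  · exact (continuous_norm.comp ((continuous_circleMap x r).sub continuous_const)).pow 2
  · intro θ
    have := abs_circleMap_sub_pos h θ
    positivity

lemma ker_eq_re {x z : ℂ} {r : ℝ} (hr : 0 ≤ r) {θ : ℝ} (hne : circleMap x r θ ≠ z) :
    ker x r z θ = 1 + 2 * ((z - x) * (circleMap x r θ - z)⁻¹).re := by
  set ζ := circleMap x r θ with hζdef
  have hζ : ‖ζ - x‖ = r := abs_circleMap_sub_center x hr θ
  have hd : ζ - z ≠ 0 := sub_ne_zero.2 hne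
  have hsq : Complex.normSq (ζ - z) ≠ 0 := by
    simpa [Complex.normSq_eq_zero] using hd
  have hr2 : r ^ 2 = Complex.normSq (ζ - x) := by rw [← Complex.sq_norm, hζ]
  have hmul : (z - x) * (ζ - z)⁻¹ = (z - x) / (ζ - z) := (div_eq_mul_inv _ _).symm
  rw [ker, ← hζdef, Complex.sq_norm, Complex.sq_norm, hr2, hmul, Complex.div_re]
  field_simp [hsq]
  simp only [Complex.normSq_apply, Complex.sub_re, Complex.sub_im]
  ring


lemma continuous_circleMap_inv (hz : ‖z - x‖ < r) :
    Continuous fun θ => (circleMap x r θ - z)⁻¹ := by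
  have hb : z ∈ ball x r := by rwa [mem_ball, Complex.dist_eq]
  refine Continuous.inv₀ ((continuous_circleMap x r).sub continuous_const) ?_
  exact fun θ => sub_ne_zero.2 (circleMap_ne_mem_ball hb θ)

lemma integral_ker (hz : ‖z - x‖ < r) :
    (∫ θ in (0:ℝ)..(2*Real.pi), ker x r z θ) = 2 * Real.pi := by
  have hρ : 0 ≤ ‖z - x‖ := norm_nonneg _
  have hr : 0 < r := lt_of_le_of_lt hρ hz
  have hb : z ∈ ball x r := by rwa [mem_ball, Complex.dist_eq]
  have hne : ∀ θ : ℝ, circleMap x r θ ≠ z := circleMap_ne_mem_ball hb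
  have h1 : Set.EqOn (ker x r z)
      (fun θ => 1 + 2 * ((z - x) * (circleMap x r θ - z)⁻¹).re) (Set.uIcc 0 (2*Real.pi)) :=
    fun θ _ => ker_eq_re hr.le (hne θ)
  rw [intervalIntegral.integral_congr h1]
  have hci : Continuous fun θ => (z - x) * (circleMap x r θ - z)⁻¹ :=
    continuous_const.mul (continuous_circleMap_inv hz)
  have hii : IntervalIntegrable (fun θ => (z - x) * (circleMap x r θ - z)⁻¹)
      volume 0 (2*Real.pi) := hci.intervalIntegrable _ _
  have hre : (∫ θ in (0:ℝ)..(2*Real.pi), ((z - x) * (circleMap x r θ - z)⁻¹).re) = 0 := by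
    rw [show (∫ θ in (0:ℝ)..(2*Real.pi), ((z - x) * (circleMap x r θ - z)⁻¹).re) =
      ∫ θ in (0:ℝ)..(2*Real.pi), Complex.reCLM ((z - x) * (circleMap x r θ - z)⁻¹) from rfl,
      Complex.reCLM.intervalIntegral_comp_comm hii,
      intervalIntegral.integral_const_mul, integral_circleMap_inv hb]
    simp
  have hg : IntervalIntegrable (fun θ => 2 * ((z - x) * (circleMap x r θ - z)⁻¹).re)
      volume 0 (2*Real.pi) :=
    (continuous_const.mul (Complex.continuous_re.comp hci)).intervalIntegrable _ _
  rw [intervalIntegral.integral_add intervalIntegrable_const hg]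
  rw [intervalIntegral.integral_const_mul, hre]
  simp

lemma intervalIntegrable_mul_ker (hz : ‖z - x‖ < r)
    (hc : Continuous fun θ => f (circleMap x r θ)) :
    IntervalIntegrable (fun θ => f (circleMap x r θ) * ker x r z θ) volume 0 (2*Real.pi) :=
  (hc.mul (continuous_ker hz)).intervalIntegrable _ _

lemma two_pi_pos : (0:ℝ) < 2 * Real.pi := by positivity

lemma abs_harmExt_le {C : ℝ} (hz : ‖z - x‖ < r)
    (hc : Continuous fun θ => f (circleMap x r θ))
    (hb : ∀ θ : ℝ, |f (circleMap x r θ)| ≤ C) :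
    |harmExt f x r z| ≤ C := by
  have h2π := two_pi_pos
  have hC : 0 ≤ C := le_trans (abs_nonneg _) (hb 0)
  rw [harmExt_eq, abs_mul, _root_.abs_of_nonneg (inv_nonneg.2 h2π.le)]
  rw [inv_mul_le_iff₀ h2π]
  calc |∫ θ in (0:ℝ)..(2*Real.pi), f (circleMap x r θ) * ker x r z θ|
      ≤ ∫ θ in (0:ℝ)..(2*Real.pi), |f (circleMap x r θ) * ker x r z θ| :=
        intervalIntegral.abs_integral_le_integral_abs h2π.le
    _ ≤ ∫ θ in (0:ℝ)..(2*Real.pi), C * ker x r z θ := by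
        apply intervalIntegral.integral_mono_on h2π.le
          ((intervalIntegrable_mul_ker hz hc).abs)
          ((continuous_const.mul (continuous_ker hz)).intervalIntegrable _ _)
        intro θ _
        rw [abs_mul, _root_.abs_of_nonneg (ker_nonneg hz θ)]
        exact mul_le_mul_of_nonneg_right (hb θ) (ker_nonneg hz θ)
    _ = C * (2 * Real.pi) := by rw [intervalIntegral.integral_const_mul, integral_ker hz]
    _ = 2 * Real.pi * C := by ring

lemma harmExt_sub_self_le {ε L δ : ℝ} (hz : ‖z - x‖ < r)
    (hc : Continuous fun θ => f (circleMap x r θ))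
    (hδ : 0 < δ) (hε : 0 ≤ ε) (hL : 0 ≤ L)
    (hnear : ∀ θ : ℝ, ‖circleMap x r θ - z‖ ≤ δ → |f (circleMap x r θ) - f z| ≤ ε)
    (hfar : ∀ θ : ℝ, |f (circleMap x r θ) - f z| ≤ L) :
    |harmExt f x r z - f z| ≤ ε + L * ((r^2 - ‖z - x‖^2) / δ^2) := by
  have h2π := two_pi_pos
  have hρ : 0 ≤ ‖z - x‖ := norm_nonneg _
  have hr : 0 < r := lt_of_le_of_lt hρ hz
  have hInt := intervalIntegrable_mul_ker hz hc
  have hInt2 : IntervalIntegrable (fun θ => f z * ker x r z θ) volume 0 (2*Real.pi) :=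
    (continuous_const.mul (continuous_ker hz)).intervalIntegrable _ _
  have hsub : harmExt f x r z - f z = (2 * Real.pi)⁻¹ *
      ∫ θ in (0:ℝ)..(2*Real.pi), (f (circleMap x r θ) - f z) * ker x r z θ := by
    have hdiff : (∫ θ in (0:ℝ)..(2*Real.pi), (f (circleMap x r θ) - f z) * ker x r z θ)
        = (∫ θ in (0:ℝ)..(2*Real.pi), f (circleMap x r θ) * ker x r z θ)
          - ∫ θ in (0:ℝ)..(2*Real.pi), f z * ker x r z θ := by
      rw [← intervalIntegral.integral_sub hInt hInt2]
      apply intervalIntegral.integral_congr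
      intro θ _
      ring
    rw [hdiff, intervalIntegral.integral_const_mul, integral_ker hz, harmExt_eq, mul_sub]
    have hone : (2 * Real.pi)⁻¹ * (f z * (2 * Real.pi)) = f z := by
      field_simp
    rw [hone]
  rw [hsub, abs_mul, _root_.abs_of_nonneg (inv_nonneg.2 h2π.le), inv_mul_le_iff₀ h2π]
  have hkey : ∀ θ : ℝ, |(f (circleMap x r θ) - f z) * ker x r z θ| ≤
      ε * ker x r z θ + L * ((r^2 - ‖z - x‖^2) / δ^2) := by
    intro θ
    have hk := ker_nonneg hz θ
    have hfarb : 0 ≤ (r^2 - ‖z - x‖^2) / δ^2 := by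
      apply div_nonneg (by nlinarith) (by positivity)
    rw [abs_mul, _root_.abs_of_nonneg hk]
    rcases le_or_gt (‖circleMap x r θ - z‖) δ with hle | hgt
    · have := mul_le_mul_of_nonneg_right (hnear θ hle) hk
      nlinarith [mul_nonneg hL hfarb]
    · have hkf := ker_le_far hz hδ hgt.le
      have h1 : |f (circleMap x r θ) - f z| * ker x r z θ ≤
          L * ((r^2 - ‖z - x‖^2) / δ^2) := by
        apply mul_le_mul (hfar θ) hkf hk hL
      nlinarith [mul_nonneg hε hk]
  calc |∫ θ in (0:ℝ)..(2*Real.pi), (f (circleMap x r θ) - f z) * ker x r z θ|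
      ≤ ∫ θ in (0:ℝ)..(2*Real.pi), |(f (circleMap x r θ) - f z) * ker x r z θ| :=
        intervalIntegral.abs_integral_le_integral_abs h2π.le
    _ ≤ ∫ θ in (0:ℝ)..(2*Real.pi), (ε * ker x r z θ +
          L * ((r^2 - ‖z - x‖^2) / δ^2)) := by
        apply intervalIntegral.integral_mono_on h2π.le
          (((hc.sub continuous_const).mul (continuous_ker hz)).abs.intervalIntegrable _ _)
          (((continuous_const.mul (continuous_ker hz)).add continuous_const).intervalIntegrable _ _)
        intro θ _
        exact hkey θ
    _ = (ε + L * ((r^2 - ‖z - x‖^2) / δ^2)) * (2 * Real.pi) := by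
        rw [intervalIntegral.integral_add (f := fun θ => ε * ker x r z θ)
          ((continuous_const.mul (continuous_ker hz)).intervalIntegrable _ _)
          intervalIntegrable_const,
          intervalIntegral.integral_const_mul, integral_ker hz,
          intervalIntegral.integral_const]
        simp
        ring
    _ = 2 * Real.pi * (ε + L * ((r^2 - ‖z - x‖^2) / δ^2)) := by ring

lemma harmExt_center (hr : 0 < r) : harmExt f x r x = circleAvg f x r := by
  rw [harmExt_eq, circleAvg_eq]
  congr 1
  apply intervalIntegral.integral_congr
  intro θ _
  have hk : ker x r x θ = 1 := by
    rw [ker, sub_self, norm_zero]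
    rw [abs_circleMap_sub_center x hr.le]
    field_simp
    simp
  show f (circleMap x r θ) * ker x r x θ = f (circleMap x r θ)
  rw [hk, mul_one]

lemma mem_unitDisk {w : ℂ} : w ∈ unitDisk ↔ ‖w‖ < 1 := by
  simp [unitDisk, mem_ball_zero_iff]

lemma abs_circleMap_le (x : ℂ) {r : ℝ} (hr0 : 0 ≤ r) (θ : ℝ) :
    ‖circleMap x r θ‖ ≤ ‖x‖ + r := by
  have h := norm_add_le x (circleMap x r θ - x)
  rw [abs_circleMap_sub_center x hr0] at h
  have e : x + (circleMap x r θ - x) = circleMap x r θ := by ring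
  rwa [e] at h

lemma circleMap_mem_unitDisk {κ : ℝ} (hκ1 : κ < 1) {x : ℂ} {r : ℝ}
    (hx : x ∈ unitDisk) (hr0 : 0 ≤ r) (hrκ : r ≤ κ * (1 - ‖x‖)) (θ : ℝ) :
    circleMap x r θ ∈ unitDisk := by
  rw [mem_unitDisk] at hx ⊢
  have h := abs_circleMap_le x hr0 θ
  nlinarith [norm_nonneg x]

lemma tendsto_circleMap {ι : Type*} {l : Filter ι} {x : ι → ℂ} {r : ι → ℝ} {x₀ : ℂ} {r₀ : ℝ}
    (hx : Tendsto x l (𝓝 x₀)) (hr : Tendsto r l (𝓝 r₀)) (θ : ℝ) :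
    Tendsto (fun n => circleMap (x n) (r n) θ) l (𝓝 (circleMap x₀ r₀ θ)) := by
  have h1 : Tendsto (fun n => ((r n : ℝ) : ℂ)) l (𝓝 ((r₀ : ℝ) : ℂ)) :=
    (Complex.continuous_ofReal.tendsto r₀).comp hr
  exact hx.add (h1.mul tendsto_const_nhds)

lemma tendsto_harmExt {ι : Type*} {l : Filter ι} [l.IsCountablyGenerated]
    {x : ι → ℂ} {r : ι → ℝ} {z : ι → ℂ} {x₀ z₀ : ℂ} {r₀ : ℝ}
    (hx : Tendsto x l (𝓝 x₀)) (hr : Tendsto r l (𝓝 r₀)) (hz : Tendsto z l (𝓝 z₀))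
    (hρ : ‖z₀ - x₀‖ < r₀)
    (hfc : ∀ θ : ℝ, ContinuousAt f (circleMap x₀ r₀ θ))
    {M : ℝ} (hfb : ∀ᶠ n in l, ∀ θ : ℝ, |f (circleMap (x n) (r n) θ)| ≤ M)
    (hmeas : ∀ᶠ n in l, Continuous fun θ => f (circleMap (x n) (r n) θ)) :
    Tendsto (fun n => harmExt f (x n) (r n) (z n)) l (𝓝 (harmExt f x₀ r₀ z₀)) := by
  set ρ₀ := ‖z₀ - x₀‖ with hρ₀
  have hρnn : 0 ≤ ρ₀ := norm_nonneg _
  set ε := (r₀ - ρ₀) / 4 with hε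
  have hεpos : 0 < ε := by rw [hε]; linarith
  have habs : Tendsto (fun n => ‖z n - x n‖) l (𝓝 ρ₀) :=
    (continuous_norm.tendsto _).comp (hz.sub hx)
  have hev1 : ∀ᶠ n in l, ‖z n - x n‖ < ρ₀ + ε :=
    habs.eventually_lt_const (by linarith)
  have hev2 : ∀ᶠ n in l, r₀ - ε < r n := hr.eventually_const_lt (by linarith)
  have hev3 : ∀ᶠ n in l, r n < r₀ + ε := hr.eventually_lt_const (by linarith)
  have hr₀pos : 0 < r₀ := lt_of_le_of_lt hρnn hρ
  set K : ℝ := (r₀ + ε)^2 / (2*ε)^2 with hK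
  have hKpos : 0 < K := div_pos (pow_pos (by linarith) 2) (by positivity)
  simp only [harmExt_eq]
  apply Tendsto.const_mul
  apply intervalIntegral.tendsto_integral_filter_of_dominated_convergence
    (fun _ => M * K + 1)
  · filter_upwards [hmeas, hev1, hev2, hev3] with n hm h1 h2 h3
    have hρn : ‖z n - x n‖ < r n := by linarith
    exact (hm.mul (continuous_ker hρn)).aestronglyMeasurable
  · filter_upwards [hmeas, hfb, hev1, hev2, hev3] with n hm hb h1 h2 h3
    apply Eventually.of_forall
    intro θ _
    have hρn : ‖z n - x n‖ < r n := by linarith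
    have hM0 : 0 ≤ M := le_trans (abs_nonneg _) (hb 0)
    have hker1 : ker (x n) (r n) (z n) θ ≤ K := by
      have hfar : 2*ε ≤ ‖circleMap (x n) (r n) θ - z n‖ := by
        have := le_abs_circleMap_sub (x n) (z n) (by linarith : (0:ℝ) ≤ r n) θ
        linarith
      have := ker_le_far hρn (by linarith : (0:ℝ) < 2*ε) hfar
      apply le_trans this
      rw [hK]
      apply div_le_div_of_nonneg_right ?_ (by positivity)
      · nlinarith [norm_nonneg (z n - x n)]
    have hkn := ker_nonneg hρn θ
    rw [Real.norm_eq_abs, abs_mul, _root_.abs_of_nonneg hkn]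
    have : |f (circleMap (x n) (r n) θ)| * ker (x n) (r n) (z n) θ ≤ M * K := by
      apply mul_le_mul (hb θ) hker1 hkn hM0
    linarith
  · exact intervalIntegrable_const
  · apply Eventually.of_forall
    intro θ _
    have hcm := tendsto_circleMap hx hr θ
    have hf : Tendsto (fun n => f (circleMap (x n) (r n) θ)) l (𝓝 (f (circleMap x₀ r₀ θ))) :=
      (hfc θ).tendsto.comp hcm
    have hnum : Tendsto (fun n => (r n)^2 - ‖z n - x n‖^2) l
        (𝓝 (r₀^2 - ρ₀^2)) := (hr.pow 2).sub (habs.pow 2)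
    have hden : Tendsto (fun n => ‖circleMap (x n) (r n) θ - z n‖^2) l
        (𝓝 (‖circleMap x₀ r₀ θ - z₀‖^2)) :=
      (((continuous_norm.tendsto _).comp (hcm.sub hz)).pow 2)
    have hdne : ‖circleMap x₀ r₀ θ - z₀‖^2 ≠ 0 := by
      have := abs_circleMap_sub_pos hρ θ
      positivity
    exact hf.mul (hnum.div hden hdne)

lemma continuousAt_harmExt {x₀ : ℂ} {r₀ : ℝ} {z₀ : ℂ}
    (hρ : ‖z₀ - x₀‖ < r₀)
    (hfc : ∀ θ : ℝ, ContinuousAt f (circleMap x₀ r₀ θ))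
    {M : ℝ} (hfb : ∀ θ : ℝ, |f (circleMap x₀ r₀ θ)| ≤ M) :
    ContinuousAt (harmExt f x₀ r₀) z₀ := by
  have hmeas : Continuous fun θ => f (circleMap x₀ r₀ θ) := by
    apply continuous_iff_continuousAt.2
    intro θ
    exact (hfc θ).comp (continuous_circleMap x₀ r₀).continuousAt
  exact tendsto_harmExt tendsto_const_nhds tendsto_const_nhds (tendsto_id (α := ℂ) (x := 𝓝 z₀))
    hρ hfc (Eventually.of_forall fun _ => hfb) (Eventually.of_forall fun _ => hmeas)

lemma integral_holo_center {g : ℂ → ℂ} {c : ℂ} {t : ℝ} (ht : 0 < t)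
    (hg : ∀ w ∈ closedBall c t, DifferentiableAt ℂ g w) :
    (∫ φ in (0:ℝ)..(2*Real.pi), g (circleMap c t φ)) = (2 * Real.pi : ℝ) * g c := by
  have hcont : ContinuousOn g (closedBall c t) := fun w hw =>
    (hg w hw).continuousAt.continuousWithinAt
  have hkey := Complex.circleIntegral_sub_center_inv_smul_of_differentiable_on_off_countable ht
    Set.countable_empty hcont (fun w hw => hg w (ball_subset_closedBall hw.1))
  have hunfold : (∮ w in C(c, t), (w - c)⁻¹ • g w)
      = ∫ φ in (0:ℝ)..(2*Real.pi), I * g (circleMap c t φ) := by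
    rw [circleIntegral]
    apply intervalIntegral.integral_congr
    intro φ _
    have h6 : circleMap 0 t φ ≠ 0 := circleMap_ne_center ht.ne'
    show deriv (circleMap c t) φ • ((circleMap c t φ - c)⁻¹ • g (circleMap c t φ)) = _
    rw [deriv_circleMap, circleMap_sub_center, smul_eq_mul, smul_eq_mul]
    field_simp
  rw [hunfold, intervalIntegral.integral_const_mul, smul_eq_mul] at hkey
  have h2 : I * (∫ φ in (0:ℝ)..(2*Real.pi), g (circleMap c t φ))
      = I * ((2 * Real.pi : ℝ) * g c) := by
    rw [hkey]
    push_cast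
    ring
  exact mul_left_cancel₀ I_ne_zero h2

lemma integral_ker_circle {x c : ℂ} {r t : ℝ} (ht : 0 < t) (hr0 : 0 ≤ r)
    (hsub : closedBall c t ⊆ ball x r) (θ : ℝ) :
    (∫ φ in (0:ℝ)..(2*Real.pi), ker x r (circleMap c t φ) θ)
      = (2 * Real.pi) * ker x r c θ := by
  have hζ : ∀ w ∈ closedBall c t, circleMap x r θ ≠ w := by
    intro w hw h
    exact (circleMap_notMem_ball x r θ) (h ▸ hsub hw)
  set g : ℂ → ℂ := fun w => (w - x) * (circleMap x r θ - w)⁻¹ with hgdef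
  have hg : ∀ w ∈ closedBall c t, DifferentiableAt ℂ g w := by
    intro w hw
    apply DifferentiableAt.mul (differentiableAt_id.sub_const x)
    exact DifferentiableAt.inv ((differentiableAt_const _).sub differentiableAt_id)
      (sub_ne_zero.2 (hζ w hw))
  have hmvp := integral_holo_center ht hg
  have hker : ∀ w ∈ closedBall c t, ker x r w θ = 1 + 2 * (g w).re := by
    intro w hw
    exact ker_eq_re hr0 (hζ w hw)
  have hgc : Continuous fun φ => g (circleMap c t φ) := by
    apply Continuous.mul (((continuous_circleMap c t).sub continuous_const))
    apply Continuous.inv₀ (continuous_const.sub (continuous_circleMap c t))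
    intro φ
    exact sub_ne_zero.2 (hζ _ (sphere_subset_closedBall (circleMap_mem_sphere c ht.le φ)))
  have h1 : (∫ φ in (0:ℝ)..(2*Real.pi), ker x r (circleMap c t φ) θ)
      = ∫ φ in (0:ℝ)..(2*Real.pi), (1 + 2 * (g (circleMap c t φ)).re) := by
    apply intervalIntegral.integral_congr
    intro φ _
    exact hker _ (sphere_subset_closedBall (circleMap_mem_sphere c ht.le φ))
  rw [h1]
  have hgi : IntervalIntegrable (fun φ => g (circleMap c t φ)) volume 0 (2*Real.pi) :=
    hgc.intervalIntegrable _ _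
  have hre : (∫ φ in (0:ℝ)..(2*Real.pi), (g (circleMap c t φ)).re)
      = ((2 * Real.pi : ℝ) * g c).re := by
    rw [show (∫ φ in (0:ℝ)..(2*Real.pi), (g (circleMap c t φ)).re) =
      ∫ φ in (0:ℝ)..(2*Real.pi), Complex.reCLM (g (circleMap c t φ)) from rfl,
      Complex.reCLM.intervalIntegral_comp_comm hgi, hmvp]
    rfl
  have hg2 : IntervalIntegrable (fun φ => 2 * (g (circleMap c t φ)).re) volume 0 (2*Real.pi) :=
    (continuous_const.mul (Complex.continuous_re.comp hgc)).intervalIntegrable _ _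
  rw [intervalIntegral.integral_add intervalIntegrable_const hg2,
    intervalIntegral.integral_const_mul, hre, intervalIntegral.integral_const]
  have hcre : ((2 * Real.pi : ℝ) * g c : ℂ).re = (2 * Real.pi) * (g c).re :=
    Complex.re_ofReal_mul _ _
  rw [hcre, hker c (mem_closedBall_self ht.le)]
  simp
  ring

lemma harmExt_mvp {c : ℂ} {t : ℝ} {x : ℂ} {r : ℝ} (ht : 0 < t) (hr0 : 0 < r)
    (hsub : closedBall c t ⊆ ball x r)
    (hc : Continuous fun θ => f (circleMap x r θ)) :
    harmExt f x r c = circleAvg (harmExt f x r) c t := by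
  have h2π := two_pi_pos
  have hwball : ∀ φ : ℝ, circleMap c t φ ∈ ball x r := fun φ =>
    hsub (sphere_subset_closedBall (circleMap_mem_sphere c ht.le φ))
  have hwρ : ∀ φ : ℝ, ‖circleMap c t φ - x‖ < r := by
    intro φ
    have := hwball φ
    rwa [mem_ball, Complex.dist_eq] at this
  have hcball : c ∈ ball x r := hsub (mem_closedBall_self ht.le)
  have hcρ : ‖c - x‖ < r := by rwa [mem_ball, Complex.dist_eq] at hcball
  -- joint continuity of the integrand
  have Hcont : Continuous (Function.uncurry fun φ θ =>
      f (circleMap x r θ) * ker x r (circleMap c t φ) θ) := by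
    apply Continuous.mul (hc.comp continuous_snd)
    unfold ker
    apply Continuous.div
    · apply Continuous.sub continuous_const
      exact (continuous_norm.comp
        (((continuous_circleMap c t).comp continuous_fst).sub continuous_const)).pow 2
    · apply Continuous.pow
      apply continuous_norm.comp
      exact ((continuous_circleMap x r).comp continuous_snd).sub
        ((continuous_circleMap c t).comp continuous_fst)
    · intro p
      have := abs_circleMap_sub_pos (hwρ p.1) p.2
      positivity
  -- Fubini
  have hInt : Integrable (Function.uncurry fun φ θ =>
      f (circleMap x r θ) * ker x r (circleMap c t φ) θ)
      ((volume.restrict (Set.Ioc (0:ℝ) (2*Real.pi))).prod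
        (volume.restrict (Set.Ioc (0:ℝ) (2*Real.pi)))) := by
    rw [Measure.prod_restrict]
    apply MeasureTheory.IntegrableOn.mono_set (t := Set.Icc (0:ℝ) (2*Real.pi) ×ˢ
      Set.Icc (0:ℝ) (2*Real.pi))
    · exact Hcont.continuousOn.integrableOn_compact (isCompact_Icc.prod isCompact_Icc)
    · exact Set.prod_mono Set.Ioc_subset_Icc_self Set.Ioc_subset_Icc_self
  have hswap := MeasureTheory.integral_integral_swap hInt
  -- convert to interval integrals
  have e1 : (∫ φ in (0:ℝ)..(2*Real.pi), ∫ θ in (0:ℝ)..(2*Real.pi),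
        f (circleMap x r θ) * ker x r (circleMap c t φ) θ)
      = ∫ θ in (0:ℝ)..(2*Real.pi), ∫ φ in (0:ℝ)..(2*Real.pi),
        f (circleMap x r θ) * ker x r (circleMap c t φ) θ := by
    simp only [intervalIntegral.integral_of_le h2π.le]
    exact hswap
  have e2 : ∀ θ : ℝ, (∫ φ in (0:ℝ)..(2*Real.pi),
      f (circleMap x r θ) * ker x r (circleMap c t φ) θ)
      = f (circleMap x r θ) * ((2*Real.pi) * ker x r c θ) := by
    intro θ
    rw [intervalIntegral.integral_const_mul, integral_ker_circle ht hr0.le hsub θ]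
  rw [circleAvg_eq]
  symm
  have e3 : ∀ φ : ℝ, harmExt f x r (circleMap c t φ) = (2 * Real.pi)⁻¹ *
      ∫ θ in (0:ℝ)..(2*Real.pi), f (circleMap x r θ) * ker x r (circleMap c t φ) θ :=
    fun φ => harmExt_eq f x r _
  calc (2 * Real.pi)⁻¹ * ∫ φ in (0:ℝ)..(2*Real.pi), harmExt f x r (circleMap c t φ)
      = (2 * Real.pi)⁻¹ * ((2 * Real.pi)⁻¹ * ∫ φ in (0:ℝ)..(2*Real.pi),
          ∫ θ in (0:ℝ)..(2*Real.pi), f (circleMap x r θ) * ker x r (circleMap c t φ) θ) := by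
        congr 1
        rw [← intervalIntegral.integral_const_mul]
        apply intervalIntegral.integral_congr
        intro φ _
        exact e3 φ
    _ = (2 * Real.pi)⁻¹ * ((2 * Real.pi)⁻¹ * ∫ θ in (0:ℝ)..(2*Real.pi),
          f (circleMap x r θ) * ((2*Real.pi) * ker x r c θ)) := by
        rw [e1]
        congr 2
        apply intervalIntegral.integral_congr
        intro θ _
        exact e2 θ
    _ = (2 * Real.pi)⁻¹ * ∫ θ in (0:ℝ)..(2*Real.pi),
          f (circleMap x r θ) * ker x r c θ := by
        have : ∀ θ : ℝ, f (circleMap x r θ) * ((2*Real.pi) * ker x r c θ)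
            = (2*Real.pi) * (f (circleMap x r θ) * ker x r c θ) := fun θ => by ring
        rw [intervalIntegral.integral_congr (fun θ _ => this θ),
          intervalIntegral.integral_const_mul]
        field_simp
    _ = harmExt f x r c := (harmExt_eq f x r c).symm

section Main

variable {κ : ℝ} {u : ℂ → ℝ} {M : ℝ}

lemma adm_bounds (hκ0 : 0 < κ) (hκ1 : κ < 1) {z x : ℂ} {r b : ℝ}
    (hzb : ‖z‖ ≤ b) (hb1 : b < 1)
    (hzx : ‖z - x‖ ≤ r) (hrκ : r ≤ κ * (1 - ‖x‖)) :
    (∀ θ : ℝ, ‖circleMap x r θ‖ ≤ (2*κ + (1-κ)*b)/(1+κ))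
    ∧ ‖x‖ < 1 ∧ b ≤ (2*κ + (1-κ)*b)/(1+κ) ∧ (2*κ + (1-κ)*b)/(1+κ) < 1 := by
  have hb0 : 0 ≤ b := le_trans (norm_nonneg _) hzb
  have hr0 : 0 ≤ r := le_trans (norm_nonneg _) hzx
  have ha0 : 0 ≤ ‖x‖ := norm_nonneg _
  have hxz : ‖x‖ ≤ r + b := by
    have h := norm_add_le (x - z) z
    have e : x - z + z = x := by ring
    rw [e, norm_sub_rev x z] at h
    linarith
  have hkey : (1 + κ) * ‖x‖ ≤ κ + b := by nlinarith
  have hx1 : ‖x‖ < 1 := by nlinarith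
  refine ⟨?_, hx1, ?_, ?_⟩
  · intro θ
    have h1 := abs_circleMap_le x hr0 θ
    rw [le_div_iff₀ (by linarith : (0:ℝ) < 1 + κ)]
    nlinarith
  · rw [le_div_iff₀ (by linarith : (0:ℝ) < 1 + κ)]; nlinarith
  · rw [div_lt_one (by linarith : (0:ℝ) < 1 + κ)]; nlinarith

lemma mem_adm_iff {z : ℂ} {p : ℂ × ℝ} : p ∈ admissiblePairs u κ z ↔
    p.1 ∈ unitDisk ∧ 0 < p.2 ∧ p.2 ≤ κ * (1 - ‖p.1‖) ∧
    ‖z - p.1‖ < p.2 ∧ u p.1 = circleAvg u p.1 p.2 := Iff.rfl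

lemma cont_u_circle (hκ1 : κ < 1) (hcont : ContinuousOn u unitDisk) {x : ℂ} {r : ℝ}
    (hx : x ∈ unitDisk) (hr0 : 0 ≤ r) (hrκ : r ≤ κ * (1 - ‖x‖)) :
    Continuous fun θ => u (circleMap x r θ) :=
  hcont.comp_continuous (continuous_circleMap x r)
    (fun θ => circleMap_mem_unitDisk hκ1 hx hr0 hrκ θ)

lemma self_pair (hrmvp : ∀ z ∈ unitDisk, ∃ ρ : ℝ, 0 < ρ ∧ ρ ≤ κ * (1 - ‖z‖) ∧
      u z = circleAvg u z ρ) {z : ℂ} (hz : z ∈ unitDisk) :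
    ∃ ρ : ℝ, (z, ρ) ∈ admissiblePairs u κ z ∧ harmExt u z ρ z = u z := by
  obtain ⟨ρ, hρ0, hρκ, heq⟩ := hrmvp z hz
  refine ⟨ρ, ⟨hz, hρ0, hρκ, by simpa using hρ0, heq⟩, ?_⟩
  rw [harmExt_center hρ0]
  exact heq.symm

lemma adm_harmExt_abs_le (hκ1 : κ < 1) (hM : ∀ w ∈ unitDisk, |u w| ≤ M)
    (hcont : ContinuousOn u unitDisk) {z : ℂ} {p : ℂ × ℝ}
    (hp : p ∈ admissiblePairs u κ z) : |harmExt u p.1 p.2 z| ≤ M := by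
  obtain ⟨hx, hr0, hrκ, hρ, _⟩ := hp
  exact abs_harmExt_le hρ (cont_u_circle hκ1 hcont hx hr0.le hrκ)
    (fun θ => hM _ (circleMap_mem_unitDisk hκ1 hx hr0.le hrκ θ))

lemma vFun_bddAbove (hκ1 : κ < 1) (hM : ∀ w ∈ unitDisk, |u w| ≤ M)
    (hcont : ContinuousOn u unitDisk) (z : ℂ) :
    BddAbove ((fun p : ℂ × ℝ => harmExt u p.1 p.2 z) '' admissiblePairs u κ z) := by
  refine ⟨M, ?_⟩
  rintro y ⟨p, hp, rfl⟩
  exact (abs_le.1 (adm_harmExt_abs_le hκ1 hM hcont hp)).2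

lemma u_le_vFun (hκ1 : κ < 1) (hM : ∀ w ∈ unitDisk, |u w| ≤ M)
    (hcont : ContinuousOn u unitDisk)
    (hrmvp : ∀ z ∈ unitDisk, ∃ ρ : ℝ, 0 < ρ ∧ ρ ≤ κ * (1 - ‖z‖) ∧
      u z = circleAvg u z ρ) {z : ℂ} (hz : z ∈ unitDisk) :
    u z ≤ vFun u κ z := by
  obtain ⟨ρ, hmem, heq⟩ := self_pair hrmvp hz
  rw [vFun, ← heq]
  exact le_csSup (vFun_bddAbove hκ1 hM hcont z) ⟨(z, ρ), hmem, rfl⟩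

lemma abs_vFun_le (hκ1 : κ < 1) (hM : ∀ w ∈ unitDisk, |u w| ≤ M)
    (hcont : ContinuousOn u unitDisk)
    (hrmvp : ∀ z ∈ unitDisk, ∃ ρ : ℝ, 0 < ρ ∧ ρ ≤ κ * (1 - ‖z‖) ∧
      u z = circleAvg u z ρ) {z : ℂ} (hz : z ∈ unitDisk) :
    |vFun u κ z| ≤ M := by
  rw [abs_le]
  constructor
  · have h1 := u_le_vFun hκ1 hM hcont hrmvp hz
    have h2 := (abs_le.1 (hM z hz)).1
    linarith
  · apply Real.sSup_le
    · rintro y ⟨p, hp, rfl⟩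
      exact (abs_le.1 (adm_harmExt_abs_le hκ1 hM hcont hp)).2
    · exact le_trans (abs_nonneg _) (hM z hz)

lemma key_subseq (hκ0 : 0 < κ) (hκ1 : κ < 1) (hM : ∀ w ∈ unitDisk, |u w| ≤ M)
    (hcont : ContinuousOn u unitDisk)
    (hrmvp : ∀ w ∈ unitDisk, ∃ ρ : ℝ, 0 < ρ ∧ ρ ≤ κ * (1 - ‖w‖) ∧
      u w = circleAvg u w ρ)
    {z : ℕ → ℂ} {z₀ : ℂ} (hz₀ : z₀ ∈ unitDisk)
    (hzD : ∀ n, z n ∈ unitDisk) (hz : Tendsto z atTop (𝓝 z₀))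
    {p : ℕ → ℂ × ℝ} (hp : ∀ n, p n ∈ admissiblePairs u κ (z n)) :
    ∃ φ : ℕ → ℕ, StrictMono φ ∧
      ∃ L ∈ (fun q : ℂ × ℝ => harmExt u q.1 q.2 z₀) '' admissiblePairs u κ z₀,
        Tendsto (fun n => harmExt u (p (φ n)).1 (p (φ n)).2 (z (φ n))) atTop (𝓝 L) := by
  have hDopen : IsOpen unitDisk := isOpen_ball
  have huAt : ∀ w ∈ unitDisk, ContinuousAt u w := fun w hw =>
    hcont.continuousAt (hDopen.mem_nhds hw)
  have hK : IsCompact ((closedBall (0:ℂ) 1) ×ˢ (Set.Icc (0:ℝ) κ)) :=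
    (isCompact_closedBall _ _).prod isCompact_Icc
  have hpK : ∀ n, p n ∈ (closedBall (0:ℂ) 1) ×ˢ (Set.Icc (0:ℝ) κ) := by
    intro n
    obtain ⟨hx, hr0, hrκ, hρ, _⟩ := hp n
    rw [mem_unitDisk] at hx
    constructor
    · simp only [mem_closedBall, Complex.dist_eq, sub_zero]
      exact hx.le
    · refine ⟨hr0.le, ?_⟩
      have := norm_nonneg (p n).1
      nlinarith
  obtain ⟨q, hqmem, φ, hφ, hqt⟩ := hK.tendsto_subseq hpK
  refine ⟨φ, hφ, ?_⟩
  have hxl : Tendsto (fun n => (p (φ n)).1) atTop (𝓝 q.1) := (continuous_fst.tendsto q).comp hqt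
  have hrl : Tendsto (fun n => (p (φ n)).2) atTop (𝓝 q.2) := (continuous_snd.tendsto q).comp hqt
  have hzφ : Tendsto (fun n => z (φ n)) atTop (𝓝 z₀) := hz.comp hφ.tendsto_atTop
  have habsφ : Tendsto (fun n => ‖z (φ n) - (p (φ n)).1‖) atTop
      (𝓝 (‖z₀ - q.1‖)) := (continuous_norm.tendsto _).comp (hzφ.sub hxl)
  have hρle : ‖z₀ - q.1‖ ≤ q.2 :=
    le_of_tendsto_of_tendsto' habsφ hrl (fun n => (hp (φ n)).2.2.2.1.le)
  have hrκl : q.2 ≤ κ * (1 - ‖q.1‖) := by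
    have h1 : Tendsto (fun n => κ * (1 - ‖(p (φ n)).1‖)) atTop
        (𝓝 (κ * (1 - ‖q.1‖))) :=
      tendsto_const_nhds.mul (tendsto_const_nhds.sub
        ((continuous_norm.tendsto _).comp hxl))
    exact le_of_tendsto_of_tendsto' hrl h1 (fun n => (hp (φ n)).2.2.1)
  have hz₀lt : ‖z₀‖ < 1 := mem_unitDisk.1 hz₀
  rcases eq_or_lt_of_le hρle with heq | hlt
  · -- degenerate case : values tend to u z₀
    obtain ⟨ρsf, hmemsf, hvalsf⟩ := self_pair hrmvp hz₀
    refine ⟨u z₀, ⟨(z₀, ρsf), hmemsf, hvalsf⟩, ?_⟩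
    set b : ℝ := (1 + ‖z₀‖)/2 with hbdef
    have hzb : ‖z₀‖ < b := by rw [hbdef]; linarith
    have hbb1 : b < 1 := by rw [hbdef]; linarith
    obtain ⟨_, _, hbc, hc1⟩ := adm_bounds hκ0 hκ1 hzb.le hbb1 hρle hrκl
    set c₀ : ℝ := (2*κ + (1-κ)*b)/(1+κ) with hc₀def
    have hsubD : closedBall (0:ℂ) c₀ ⊆ unitDisk := by
      intro w hw
      rw [mem_unitDisk]
      rw [mem_closedBall, Complex.dist_eq, sub_zero] at hw
      linarith
    have hucK : UniformContinuousOn u (closedBall (0:ℂ) c₀) :=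
      (isCompact_closedBall _ _).uniformContinuousOn_of_continuous (hcont.mono hsubD)
    have hM0 : 0 ≤ M := le_trans (abs_nonneg _) (hM z₀ hz₀)
    rw [Metric.tendsto_nhds]
    intro ε hε
    obtain ⟨δ, hδ0, hδ⟩ := Metric.uniformContinuousOn_iff.1 hucK (ε/4) (by linarith)
    have hdiff : Tendsto (fun n => ((p (φ n)).2^2 -
        ‖z (φ n) - (p (φ n)).1‖^2)) atTop (𝓝 0) := by
      have h := (hrl.pow 2).sub (habsφ.pow 2)
      rw [← heq] at h
      simpa using h
    have hev2 : ∀ᶠ n in atTop, 2*M * (((p (φ n)).2^2 -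
        ‖z (φ n) - (p (φ n)).1‖^2) / (δ/2)^2) < ε/4 := by
      have h := (hdiff.const_mul (2*M)).div_const ((δ/2)^2)
      simp only [mul_zero, zero_div] at h
      have h2 := h.eventually_lt_const (by linarith : (0:ℝ) < ε/4)
      filter_upwards [h2] with n hn
      calc 2*M * (((p (φ n)).2^2 - ‖z (φ n) - (p (φ n)).1‖^2) / (δ/2)^2)
          = 2*M * ((p (φ n)).2^2 - ‖z (φ n) - (p (φ n)).1‖^2) / (δ/2)^2 := by ring
        _ < ε/4 := hn
    have hev1 : ∀ᶠ n in atTop, ‖z (φ n)‖ ≤ b := by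
      have h := ((continuous_norm.tendsto _).comp hzφ).eventually_lt_const hzb
      filter_upwards [h] with n hn
      exact hn.le
    have hev3 : ∀ᶠ n in atTop, |u (z (φ n)) - u z₀| < ε/4 := by
      have h := (huAt z₀ hz₀).tendsto.comp hzφ
      have h2 := Metric.tendsto_nhds.1 h (ε/4) (by linarith)
      filter_upwards [h2] with n hn
      rwa [Real.dist_eq] at hn
    filter_upwards [hev1, hev2, hev3] with n h1 h2 h3
    obtain ⟨hxnD, hrn0, hrnκ, hρn, _⟩ := hp (φ n)
    obtain ⟨hcircn, _, hbn, _⟩ := adm_bounds hκ0 hκ1 h1 hbb1 hρn.le hrnκ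
    have hznK : z (φ n) ∈ closedBall (0:ℂ) c₀ := by
      rw [mem_closedBall, Complex.dist_eq, sub_zero]
      linarith
    have hnear : ∀ θ : ℝ, ‖circleMap (p (φ n)).1 (p (φ n)).2 θ - z (φ n)‖ ≤ δ/2 →
        |u (circleMap (p (φ n)).1 (p (φ n)).2 θ) - u (z (φ n))| ≤ ε/4 := by
      intro θ hθ
      have hcK : circleMap (p (φ n)).1 (p (φ n)).2 θ ∈ closedBall (0:ℂ) c₀ := by
        rw [mem_closedBall, Complex.dist_eq, sub_zero]
        exact hcircn θ
      have := hδ _ hcK _ hznK (by rw [Complex.dist_eq]; linarith)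
      rw [Real.dist_eq] at this
      exact this.le
    have hfar : ∀ θ : ℝ, |u (circleMap (p (φ n)).1 (p (φ n)).2 θ) - u (z (φ n))| ≤ 2*M := by
      intro θ
      have ha := hM _ (circleMap_mem_unitDisk hκ1 hxnD hrn0.le hrnκ θ)
      have hb' := hM _ (hzD (φ n))
      calc |u (circleMap (p (φ n)).1 (p (φ n)).2 θ) - u (z (φ n))|
          ≤ |u (circleMap (p (φ n)).1 (p (φ n)).2 θ)| + |u (z (φ n))| := abs_sub _ _
        _ ≤ 2*M := by linarith
    have hest := harmExt_sub_self_le (f := u) hρn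
      (cont_u_circle hκ1 hcont hxnD hrn0.le hrnκ)
      (by linarith : (0:ℝ) < δ/2) (by linarith : (0:ℝ) ≤ ε/4)
      (by linarith : (0:ℝ) ≤ 2*M) hnear hfar
    rw [Real.dist_eq]
    have htri : |harmExt u (p (φ n)).1 (p (φ n)).2 (z (φ n)) - u z₀|
        ≤ |harmExt u (p (φ n)).1 (p (φ n)).2 (z (φ n)) - u (z (φ n))|
          + |u (z (φ n)) - u z₀| := abs_sub_le _ _ _
    have hh2 : 2*M * (((p (φ n)).2 ^ 2 - ‖z (φ n) - (p (φ n)).1‖ ^ 2) / (δ/2) ^ 2)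
        < ε/4 := h2
    linarith
  · -- nondegenerate case
    have hr₀pos : 0 < q.2 := lt_of_le_of_lt (norm_nonneg _) hlt
    obtain ⟨_, hxl1, _, _⟩ := adm_bounds hκ0 hκ1 (le_refl (‖z₀‖)) hz₀lt hρle hrκl
    have hxlD : q.1 ∈ unitDisk := mem_unitDisk.2 hxl1
    have hfc : ∀ θ : ℝ, ContinuousAt u (circleMap q.1 q.2 θ) := fun θ =>
      huAt _ (circleMap_mem_unitDisk hκ1 hxlD hr₀pos.le hrκl θ)
    have hfb : ∀ᶠ n in atTop, ∀ θ : ℝ, |u (circleMap (p (φ n)).1 (p (φ n)).2 θ)| ≤ M :=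
      Eventually.of_forall fun n θ => hM _ (circleMap_mem_unitDisk hκ1 (hp (φ n)).1
        (hp (φ n)).2.1.le (hp (φ n)).2.2.1 θ)
    have hmeas : ∀ᶠ n in atTop, Continuous fun θ =>
        u (circleMap (p (φ n)).1 (p (φ n)).2 θ) :=
      Eventually.of_forall fun n => cont_u_circle hκ1 hcont (hp (φ n)).1
        (hp (φ n)).2.1.le (hp (φ n)).2.2.1
    have htend := tendsto_harmExt hxl hrl hzφ hlt hfc hfb hmeas
    have hmean : u q.1 = circleAvg u q.1 q.2 := by
      have h1 : Tendsto (fun n => u ((p (φ n)).1)) atTop (𝓝 (u q.1)) :=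
        (huAt q.1 hxlD).tendsto.comp hxl
      have h2 : Tendsto (fun n => harmExt u (p (φ n)).1 (p (φ n)).2 ((p (φ n)).1)) atTop
          (𝓝 (harmExt u q.1 q.2 q.1)) :=
        tendsto_harmExt hxl hrl hxl (by simpa using hr₀pos) hfc hfb hmeas
      have h3 : ∀ n, u ((p (φ n)).1) = harmExt u (p (φ n)).1 (p (φ n)).2 ((p (φ n)).1) :=
        fun n => by
          rw [harmExt_center (hp (φ n)).2.1]
          exact (hp (φ n)).2.2.2.2
      rw [harmExt_center hr₀pos] at h2
      exact tendsto_nhds_unique (h1.congr h3) h2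
    exact ⟨harmExt u q.1 q.2 z₀, ⟨q, ⟨hxlD, hr₀pos, hrκl, hlt, hmean⟩, rfl⟩, htend⟩

lemma attained (hκ0 : 0 < κ) (hκ1 : κ < 1) (hM : ∀ w ∈ unitDisk, |u w| ≤ M)
    (hcont : ContinuousOn u unitDisk)
    (hrmvp : ∀ w ∈ unitDisk, ∃ ρ : ℝ, 0 < ρ ∧ ρ ≤ κ * (1 - ‖w‖) ∧
      u w = circleAvg u w ρ)
    {z₀ : ℂ} (hz₀ : z₀ ∈ unitDisk) :
    ∃ p ∈ admissiblePairs u κ z₀, vFun u κ z₀ = harmExt u p.1 p.2 z₀ := by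
  have hne : ((fun p : ℂ × ℝ => harmExt u p.1 p.2 z₀) '' admissiblePairs u κ z₀).Nonempty := by
    obtain ⟨ρ, hmem, _⟩ := self_pair hrmvp hz₀
    exact ⟨_, ⟨(z₀, ρ), hmem, rfl⟩⟩
  have hbdd := vFun_bddAbove hκ1 hM hcont z₀
  obtain ⟨y, hymono, hytend, hymem⟩ := exists_seq_tendsto_sSup hne hbdd
  choose pfun hpadm hpval using fun n => hymem n
  have hkey := key_subseq hκ0 hκ1 hM hcont hrmvp hz₀ (fun _ => hz₀)
    (tendsto_const_nhds (x := z₀)) hpadm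
  obtain ⟨φ, hφ, L, hLmem, hLtend⟩ := hkey
  have h1 : Tendsto (fun n => harmExt u (pfun (φ n)).1 (pfun (φ n)).2 z₀) atTop
      (𝓝 (sSup ((fun p : ℂ × ℝ => harmExt u p.1 p.2 z₀) '' admissiblePairs u κ z₀))) := by
    have := hytend.comp hφ.tendsto_atTop
    exact this.congr (fun n => (hpval (φ n)).symm)
  have hLe : L = vFun u κ z₀ := by
    rw [vFun]
    exact tendsto_nhds_unique hLtend h1
  obtain ⟨pq, hpq, hpqval⟩ := hLmem
  exact ⟨pq, hpq, by rw [← hLe, ← hpqval]⟩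

lemma vFun_seq_tendsto (hκ0 : 0 < κ) (hκ1 : κ < 1) (hM : ∀ w ∈ unitDisk, |u w| ≤ M)
    (hcont : ContinuousOn u unitDisk)
    (hrmvp : ∀ w ∈ unitDisk, ∃ ρ : ℝ, 0 < ρ ∧ ρ ≤ κ * (1 - ‖w‖) ∧
      u w = circleAvg u w ρ)
    {z₀ : ℂ} (hz₀ : z₀ ∈ unitDisk) {w : ℕ → ℂ} (hwD : ∀ n, w n ∈ unitDisk)
    (hw : Tendsto w atTop (𝓝 z₀)) :
    Tendsto (fun n => vFun u κ (w n)) atTop (𝓝 (vFun u κ z₀)) := by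
  have hDopen : IsOpen unitDisk := isOpen_ball
  obtain ⟨p₀, hp₀, hval₀⟩ := attained hκ0 hκ1 hM hcont hrmvp hz₀
  -- lower semicontinuity part
  have htlow : Tendsto (fun n => harmExt u p₀.1 p₀.2 (w n)) atTop (𝓝 (vFun u κ z₀)) := by
    rw [hval₀]
    have hfc : ∀ θ : ℝ, ContinuousAt u (circleMap p₀.1 p₀.2 θ) := fun θ =>
      hcont.continuousAt (hDopen.mem_nhds
        (circleMap_mem_unitDisk hκ1 hp₀.1 hp₀.2.1.le hp₀.2.2.1 θ))
    have hmc : Continuous fun θ => u (circleMap p₀.1 p₀.2 θ) :=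
      cont_u_circle hκ1 hcont hp₀.1 hp₀.2.1.le hp₀.2.2.1
    exact tendsto_harmExt tendsto_const_nhds tendsto_const_nhds hw hp₀.2.2.2.1 hfc
      (Eventually.of_forall fun _ θ => hM _
        (circleMap_mem_unitDisk hκ1 hp₀.1 hp₀.2.1.le hp₀.2.2.1 θ))
      (Eventually.of_forall fun _ => hmc)
  have hevmem : ∀ᶠ n in atTop, ‖w n - p₀.1‖ < p₀.2 := by
    have habs : Tendsto (fun n => ‖w n - p₀.1‖) atTop
        (𝓝 (‖z₀ - p₀.1‖)) :=
      (continuous_norm.tendsto _).comp (hw.sub tendsto_const_nhds)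
    exact habs.eventually_lt_const hp₀.2.2.2.1
  have hlow : ∀ᶠ n in atTop, harmExt u p₀.1 p₀.2 (w n) ≤ vFun u κ (w n) := by
    filter_upwards [hevmem] with n hn
    apply le_csSup (vFun_bddAbove hκ1 hM hcont (w n))
    exact ⟨p₀, ⟨hp₀.1, hp₀.2.1, hp₀.2.2.1, hn, hp₀.2.2.2.2⟩, rfl⟩
  -- subsequence argument
  apply tendsto_of_subseq_tendsto
  intro ns hns
  choose pfun hpadm hpval using fun n => attained hκ0 hκ1 hM hcont hrmvp (hwD (ns n))
  obtain ⟨φ, hφ, L, hLmem, hLtend⟩ := key_subseq hκ0 hκ1 hM hcont hrmvp hz₀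
    (fun n => hwD (ns n)) (hw.comp hns) hpadm
  refine ⟨φ, ?_⟩
  have hvtend : Tendsto (fun n => vFun u κ (w (ns (φ n)))) atTop (𝓝 L) :=
    hLtend.congr (fun n => (hpval (φ n)).symm)
  have hLleq : L ≤ vFun u κ z₀ := by
    obtain ⟨pq, hpq, hpqval⟩ := hLmem
    rw [← hpqval, vFun]
    exact le_csSup (vFun_bddAbove hκ1 hM hcont z₀) ⟨pq, hpq, rfl⟩
  have hgeq : vFun u κ z₀ ≤ L := by
    have hev := (hns.comp hφ.tendsto_atTop).eventually hlow
    exact le_of_tendsto_of_tendsto (htlow.comp (hns.comp hφ.tendsto_atTop)) hvtend hev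
  rw [← le_antisymm hLleq hgeq]
  exact hvtend

lemma harm_le_vFun (hκ1 : κ < 1) (hM : ∀ w ∈ unitDisk, |u w| ≤ M)
    (hcont : ContinuousOn u unitDisk) {w : ℂ} {p : ℂ × ℝ}
    (hp : p ∈ admissiblePairs u κ w) :
    harmExt u p.1 p.2 w ≤ vFun u κ w :=
  le_csSup (vFun_bddAbove hκ1 hM hcont w) ⟨p, hp, rfl⟩

lemma vFun_continuousOn (hκ0 : 0 < κ) (hκ1 : κ < 1) (hM : ∀ w ∈ unitDisk, |u w| ≤ M)
    (hcont : ContinuousOn u unitDisk)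
    (hrmvp : ∀ w ∈ unitDisk, ∃ ρ : ℝ, 0 < ρ ∧ ρ ≤ κ * (1 - ‖w‖) ∧
      u w = circleAvg u w ρ) :
    ContinuousOn (vFun u κ) unitDisk := by
  intro z₀ hz₀
  rw [ContinuousWithinAt]
  apply tendsto_iff_seq_tendsto.2
  intro x hx
  rw [tendsto_nhdsWithin_iff] at hx
  obtain ⟨hx1, hx2⟩ := hx
  obtain ⟨N, hN⟩ := eventually_atTop.1 hx2
  have hshift : Tendsto (fun n => vFun u κ (x (n + N))) atTop (𝓝 (vFun u κ z₀)) :=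
    vFun_seq_tendsto hκ0 hκ1 hM hcont hrmvp hz₀ (fun n => hN (n + N) (by omega))
      (hx1.comp (tendsto_add_atTop_nat N))
  exact (tendsto_add_atTop_iff_nat N).1 hshift

lemma ball_adm_subset_unitDisk (hκ0 : 0 < κ) (hκ1 : κ < 1) {x : ℂ} {r : ℝ}
    (hx : x ∈ unitDisk) (hrκ : r ≤ κ * (1 - ‖x‖)) :
    ball x r ⊆ unitDisk := by
  intro w hw
  rw [mem_ball, Complex.dist_eq] at hw
  rw [mem_unitDisk]
  have hx1 : ‖x‖ < 1 := mem_unitDisk.1 hx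
  have htri : ‖w‖ ≤ ‖w - x‖ + ‖x‖ := by
    have h := norm_add_le (w - x) x
    simpa using h
  nlinarith [norm_nonneg (w - x)]

lemma vFun_submean_small (hκ0 : 0 < κ) (hκ1 : κ < 1) (hM : ∀ w ∈ unitDisk, |u w| ≤ M)
    (hcont : ContinuousOn u unitDisk)
    (hrmvp : ∀ w ∈ unitDisk, ∃ ρ : ℝ, 0 < ρ ∧ ρ ≤ κ * (1 - ‖w‖) ∧
      u w = circleAvg u w ρ)
    {z₀ : ℂ} (hz₀ : z₀ ∈ unitDisk) :
    ∃ t₀ : ℝ, 0 < t₀ ∧ ∀ t : ℝ, 0 < t → t < t₀ →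
      vFun u κ z₀ ≤ circleAvg (vFun u κ) z₀ t := by
  obtain ⟨p₀, hp₀, hval₀⟩ := attained hκ0 hκ1 hM hcont hrmvp hz₀
  obtain ⟨hq1, hq2, hq3, hq4, hq5⟩ := hp₀
  refine ⟨p₀.2 - ‖z₀ - p₀.1‖, by linarith, ?_⟩
  intro t ht0 htlt
  have hsub : closedBall z₀ t ⊆ ball p₀.1 p₀.2 := by
    intro w hw
    rw [mem_closedBall, Complex.dist_eq] at hw
    rw [mem_ball, Complex.dist_eq]
    have htri : ‖w - p₀.1‖ ≤ ‖w - z₀‖ + ‖z₀ - p₀.1‖ := by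
      have h := norm_add_le (w - z₀) (z₀ - p₀.1)
      have e : w - z₀ + (z₀ - p₀.1) = w - p₀.1 := by ring
      rwa [e] at h
    linarith
  have hballD : ball p₀.1 p₀.2 ⊆ unitDisk := ball_adm_subset_unitDisk hκ0 hκ1 hq1 hq3
  have hmc : Continuous fun θ => u (circleMap p₀.1 p₀.2 θ) :=
    cont_u_circle hκ1 hcont hq1 hq2.le hq3
  have hmvp := harmExt_mvp ht0 hq2 hsub hmc
  have hsphere : ∀ θ : ℝ, circleMap z₀ t θ ∈ ball p₀.1 p₀.2 := fun θ =>
    hsub (sphere_subset_closedBall (circleMap_mem_sphere z₀ ht0.le θ))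
  have hρw : ∀ θ : ℝ, ‖circleMap z₀ t θ - p₀.1‖ < p₀.2 := by
    intro θ
    have := hsphere θ
    rwa [mem_ball, Complex.dist_eq] at this
  rw [hval₀, hmvp, circleAvg_eq, circleAvg_eq]
  apply mul_le_mul_of_nonneg_left ?_ (inv_nonneg.2 two_pi_pos.le)
  apply intervalIntegral.integral_mono_on two_pi_pos.le ?_ ?_ ?_
  · apply Continuous.intervalIntegrable
    apply continuous_iff_continuousAt.2
    intro θ
    have hcA : ContinuousAt (harmExt u p₀.1 p₀.2) (circleMap z₀ t θ) :=
      continuousAt_harmExt (hρw θ)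
        (fun θ' => hcont.continuousAt (isOpen_ball.mem_nhds
          (circleMap_mem_unitDisk hκ1 hq1 hq2.le hq3 θ')))
        (fun θ' => hM _ (circleMap_mem_unitDisk hκ1 hq1 hq2.le hq3 θ'))
    exact hcA.comp (continuous_circleMap z₀ t).continuousAt
  · apply Continuous.intervalIntegrable
    apply (vFun_continuousOn hκ0 hκ1 hM hcont hrmvp).comp_continuous (continuous_circleMap z₀ t)
    intro θ
    exact hballD (hsphere θ)
  · intro θ _
    exact harm_le_vFun hκ1 hM hcont ⟨hq1, hq2, hq3, hρw θ, hq5⟩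

lemma exists_circleMap_eq {q w : ℂ} {t : ℝ} (ht : 0 < t) (hw : ‖w - q‖ = t) :
    ∃ φ ∈ Set.Icc (0:ℝ) (2*Real.pi), circleMap q t φ = w := by
  have hval : (t : ℂ) * Complex.exp ((Complex.arg (w - q) : ℝ) * Complex.I) = w - q := by
    rw [← hw]
    exact Complex.norm_mul_exp_arg_mul_I (w - q)
  have hπ := Real.pi_pos
  rcases le_or_gt 0 (Complex.arg (w - q)) with h | h
  · refine ⟨Complex.arg (w - q), ⟨h, le_trans (Complex.arg_le_pi _) (by linarith)⟩, ?_⟩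
    rw [circleMap, hval]
    ring
  · refine ⟨Complex.arg (w - q) + 2*Real.pi,
      ⟨by linarith [Complex.neg_pi_lt_arg (w - q)], by linarith⟩, ?_⟩
    rw [circleMap]
    have he : Complex.exp (((Complex.arg (w - q) + 2*Real.pi : ℝ)) * Complex.I)
        = Complex.exp ((Complex.arg (w - q) : ℝ) * Complex.I) := by
      push_cast
      rw [add_mul, Complex.exp_add, Complex.exp_two_pi_mul_I, mul_one]
    rw [he, hval]
    ring

lemma vFun_global_submean (hκ0 : 0 < κ) (hκ1 : κ < 1) (hM : ∀ w ∈ unitDisk, |u w| ≤ M)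
    (hcont : ContinuousOn u unitDisk)
    (hrmvp : ∀ w ∈ unitDisk, ∃ ρ : ℝ, 0 < ρ ∧ ρ ≤ κ * (1 - ‖w‖) ∧
      u w = circleAvg u w ρ)
    {z₀ : ℂ} (hz₀ : z₀ ∈ unitDisk) {s : ℝ} (hs : 0 < s)
    (hsub : closedBall z₀ s ⊆ unitDisk) :
    vFun u κ z₀ ≤ circleAvg (vFun u κ) z₀ s := by
  set v := vFun u κ with hvdef
  have hM0 : 0 ≤ M := le_trans (abs_nonneg _) (hM z₀ hz₀)
  have hvc : ContinuousOn v unitDisk := vFun_continuousOn hκ0 hκ1 hM hcont hrmvp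
  have hvb : ∀ w ∈ unitDisk, |v w| ≤ M := fun w hw => abs_vFun_le hκ1 hM hcont hrmvp hw
  have hvAt : ∀ w ∈ unitDisk, ContinuousAt v w := fun w hw =>
    hvc.continuousAt (isOpen_ball.mem_nhds hw)
  have hsphD : ∀ θ : ℝ, circleMap z₀ s θ ∈ unitDisk := fun θ =>
    hsub (sphere_subset_closedBall (circleMap_mem_sphere z₀ hs.le θ))
  have hvcirc : Continuous fun θ => v (circleMap z₀ s θ) :=
    hvc.comp_continuous (continuous_circleMap z₀ s) hsphD
  set G := harmExt v z₀ s with hGdef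
  have hballD : ball z₀ s ⊆ unitDisk := fun w hw => hsub (ball_subset_closedBall hw)
  have hρ : ∀ w ∈ ball z₀ s, ‖w - z₀‖ < s := fun w hw => by
    rwa [mem_ball, Complex.dist_eq] at hw
  have hGAt : ∀ w ∈ ball z₀ s, ContinuousAt G w := fun w hw =>
    continuousAt_harmExt (hρ w hw) (fun θ => hvAt _ (hsphD θ)) (fun θ => hvb _ (hsphD θ))
  have hGb : ∀ w ∈ ball z₀ s, |G w| ≤ M := fun w hw =>
    abs_harmExt_le (hρ w hw) hvcirc (fun θ => hvb _ (hsphD θ))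
  set W := fun w => v w - G w with hWdef
  have hWAt : ∀ w ∈ ball z₀ s, ContinuousAt W w := fun w hw =>
    (hvAt w (hballD hw)).sub (hGAt w hw)
  -- boundary behaviour
  have hbdry : ∀ (qs : ℕ → ℂ), (∀ k, qs k ∈ ball z₀ s) →
      Tendsto (fun k => ‖qs k - z₀‖) atTop (𝓝 s) →
      Tendsto (fun k => W (qs k)) atTop (𝓝 0) := by
    intro qs hqs hqtend
    have hUC : UniformContinuousOn v (closedBall z₀ s) :=
      (isCompact_closedBall _ _).uniformContinuousOn_of_continuous (hvc.mono hsub)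
    rw [Metric.tendsto_nhds]
    intro ε hε
    obtain ⟨δ, hδ0, hδ⟩ := Metric.uniformContinuousOn_iff.1 hUC (ε/4) (by linarith)
    have hdiff : Tendsto (fun k => 2*M * ((s^2 - ‖qs k - z₀‖^2) / (δ/2)^2))
        atTop (𝓝 0) := by
      have h := (((tendsto_const_nhds (x := s^2)).sub (hqtend.pow 2)).div_const
        ((δ/2)^2)).const_mul (2*M)
      simpa using h
    have hev := hdiff.eventually_lt_const (show (0:ℝ) < ε/2 by linarith)
    filter_upwards [hev] with k hk
    have hqk := hqs k
    have hρk := hρ _ hqk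
    have hnear : ∀ θ : ℝ, ‖circleMap z₀ s θ - qs k‖ ≤ δ/2 →
        |v (circleMap z₀ s θ) - v (qs k)| ≤ ε/4 := by
      intro θ hθ
      have h1 : circleMap z₀ s θ ∈ closedBall z₀ s :=
        sphere_subset_closedBall (circleMap_mem_sphere z₀ hs.le θ)
      have h2 : qs k ∈ closedBall z₀ s := ball_subset_closedBall hqk
      have h3 := hδ _ h1 _ h2 (by rw [Complex.dist_eq]; linarith)
      rw [Real.dist_eq] at h3
      exact h3.le
    have hfar : ∀ θ : ℝ, |v (circleMap z₀ s θ) - v (qs k)| ≤ 2*M := by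
      intro θ
      have h1 := hvb _ (hsphD θ)
      have h2 := hvb _ (hballD hqk)
      calc |v (circleMap z₀ s θ) - v (qs k)| ≤ |v (circleMap z₀ s θ)| + |v (qs k)| :=
            abs_sub _ _
        _ ≤ 2*M := by linarith
    have hest := harmExt_sub_self_le (f := v) hρk hvcirc (by linarith : (0:ℝ) < δ/2)
      (by linarith : (0:ℝ) ≤ ε/4) (by linarith : (0:ℝ) ≤ 2*M) hnear hfar
    rw [Real.dist_eq, sub_zero]
    have hcomm : |W (qs k)| = |harmExt v z₀ s (qs k) - v (qs k)| := by
      rw [hWdef]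
      dsimp only
      rw [← hGdef, abs_sub_comm]
    rw [hcomm]
    calc |harmExt v z₀ s (qs k) - v (qs k)|
        ≤ ε/4 + 2*M * ((s^2 - ‖qs k - z₀‖^2) / (δ/2)^2) := hest
      _ < ε/4 + ε/2 := by linarith
      _ < ε := by linarith
  -- supremum of W on the ball
  set S := W '' ball z₀ s with hSdef
  have hSne : S.Nonempty := ⟨W z₀, z₀, mem_ball_self hs, rfl⟩
  have hSbdd : BddAbove S := by
    refine ⟨2*M, ?_⟩
    rintro y ⟨w, hw, rfl⟩
    have h1 := (abs_le.1 (hvb _ (hballD hw))).2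
    have h2 := (abs_le.1 (hGb _ hw)).1
    rw [hWdef]
    dsimp only
    linarith
  set m := sSup S with hmdef
  have hWlem : ∀ w ∈ ball z₀ s, W w ≤ m := fun w hw => le_csSup hSbdd ⟨w, hw, rfl⟩
  have hm0 : m ≤ 0 := by
    by_contra hpos
    push_neg at hpos
    obtain ⟨y, hymono, hytend, hymem⟩ := exists_seq_tendsto_sSup hSne hSbdd
    choose qs hqsmem hqsval using hymem
    obtain ⟨ql, hql, φ, hφ, hqt⟩ := (isCompact_closedBall z₀ s).tendsto_subseq
      (fun k => ball_subset_closedBall (hqsmem k))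
    have hWφ : Tendsto (fun k => W (qs (φ k))) atTop (𝓝 m) :=
      (hytend.comp hφ.tendsto_atTop).congr (fun k => (hqsval (φ k)).symm)
    have hqldist : ‖ql - z₀‖ ≤ s := by
      rw [← Complex.dist_eq]
      exact mem_closedBall.1 hql
    rcases eq_or_lt_of_le hqldist with hqlsp | hqlball
    · -- limit on the sphere : contradiction with m > 0
      have habs : Tendsto (fun k => ‖qs (φ k) - z₀‖) atTop (𝓝 s) := by
        have h := (continuous_norm.tendsto _).comp (hqt.sub (tendsto_const_nhds (x := z₀)))
        rwa [hqlsp] at h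
      have h0 := hbdry (fun k => qs (φ k)) (fun k => hqsmem (φ k)) habs
      have : m = 0 := tendsto_nhds_unique hWφ h0
      linarith
    · -- limit inside the ball
      have hqlb : ql ∈ ball z₀ s := by rwa [mem_ball, Complex.dist_eq]
      have hWql : W ql = m :=
        tendsto_nhds_unique (((hWAt ql hqlb).tendsto).comp hqt) hWφ
      set A := ball z₀ s ∩ W ⁻¹' {m} with hAdef
      set B := ball z₀ s ∩ W ⁻¹' {m}ᶜ with hBdef
      have hABcov : ball z₀ s ⊆ A ∪ B := by
        intro w hw
        by_cases hwm : W w = m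
        · exact Or.inl ⟨hw, hwm⟩
        · exact Or.inr ⟨hw, hwm⟩
      have hdisj : Disjoint A B := by
        rw [Set.disjoint_left]
        rintro w ⟨_, hw1⟩ ⟨_, hw2⟩
        exact hw2 hw1
      have hBopen : IsOpen B := by
        rw [isOpen_iff_mem_nhds]
        intro b hb
        exact Filter.inter_mem (isOpen_ball.mem_nhds hb.1)
          ((hWAt b hb.1).preimage_mem_nhds (isOpen_compl_singleton.mem_nhds hb.2))
      have hAopen : IsOpen A := by
        rw [isOpen_iff_mem_nhds]
        intro a ha
        obtain ⟨t₀, ht₀pos, ht₀⟩ := vFun_submean_small hκ0 hκ1 hM hcont hrmvp (hballD ha.1)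
        have ht₁pos : 0 < s - ‖a - z₀‖ := by
          have := hρ _ ha.1
          linarith
        set ε' := min t₀ (s - ‖a - z₀‖) with hε'def
        have hε'pos : 0 < ε' := lt_min ht₀pos ht₁pos
        have hWam : W a = m := ha.2
        have hsubA : ball a ε' ⊆ A := by
          intro w hw
          have hwz : ‖w - a‖ < ε' := by rwa [mem_ball, Complex.dist_eq] at hw
          have hwball : w ∈ ball z₀ s := by
            rw [mem_ball, Complex.dist_eq]
            have htri : ‖w - z₀‖ ≤ ‖w - a‖ + ‖a - z₀‖ := by
              have h := norm_add_le (w - a) (a - z₀)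
              have e : w - a + (a - z₀) = w - z₀ := by ring
              rwa [e] at h
            have := min_le_right t₀ (s - ‖a - z₀‖)
            have : ε' ≤ s - ‖a - z₀‖ := this
            linarith
          rcases eq_or_ne w a with rfl | hwa
          · exact ⟨ha.1, ha.2⟩
          · set t := ‖w - a‖ with htdef
            have ht0 : 0 < t := by
              rw [htdef]
              exact norm_pos_iff.2 (sub_ne_zero.2 hwa)
            have htlt₀ : t < t₀ := lt_of_lt_of_le hwz (min_le_left _ _)
            have hsubball : closedBall a t ⊆ ball z₀ s := by
              intro w' hw'
              rw [mem_closedBall, Complex.dist_eq] at hw'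
              rw [mem_ball, Complex.dist_eq]
              have htri : ‖w' - z₀‖ ≤ ‖w' - a‖ + ‖a - z₀‖ := by
                have h := norm_add_le (w' - a) (a - z₀)
                have e : w' - a + (a - z₀) = w' - z₀ := by ring
                rwa [e] at h
              have h1 : ε' ≤ s - ‖a - z₀‖ := min_le_right _ _
              linarith
            have hcirclemem : ∀ θ : ℝ, circleMap a t θ ∈ ball z₀ s := fun θ =>
              hsubball (sphere_subset_closedBall (circleMap_mem_sphere a ht0.le θ))
            have hGcirc : Continuous fun θ => G (circleMap a t θ) := by
              apply continuous_iff_continuousAt.2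
              intro θ
              exact (hGAt _ (hcirclemem θ)).comp (continuous_circleMap a t).continuousAt
            have hvcirc' : Continuous fun θ => v (circleMap a t θ) :=
              hvc.comp_continuous (continuous_circleMap a t) (fun θ => hballD (hcirclemem θ))
            have h1 : v a ≤ circleAvg v a t := ht₀ t ht0 htlt₀
            have h2 : G a = circleAvg G a t := harmExt_mvp ht0 hs hsubball hvcirc
            have h3 : circleAvg W a t = circleAvg v a t - circleAvg G a t := by
              rw [circleAvg_eq, circleAvg_eq, circleAvg_eq, ← mul_sub,
                ← intervalIntegral.integral_sub (hvcirc'.intervalIntegrable _ _)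
                  (hGcirc.intervalIntegrable _ _)]
            have h4 : m ≤ circleAvg W a t := by
              have hWa : W a = v a - G a := rfl
              rw [h3, ← hWam, hWa]
              linarith
            have h5 : ∀ φ' ∈ Set.Icc (0:ℝ) (2*Real.pi), W (circleMap a t φ') = m := by
              by_contra hcon
              push_neg at hcon
              obtain ⟨φ₀, hφ₀mem, hφ₀ne⟩ := hcon
              have hφ₀lt : W (circleMap a t φ₀) < m :=
                lt_of_le_of_ne (hWlem _ (hcirclemem φ₀)) hφ₀ne
              have hWc : ContinuousOn (fun θ => W (circleMap a t θ))
                  (Set.Icc (0:ℝ) (2*Real.pi)) := by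
                apply Continuous.continuousOn
                apply continuous_iff_continuousAt.2
                intro θ
                exact (hWAt _ (hcirclemem θ)).comp (continuous_circleMap a t).continuousAt
              have hintlt := intervalIntegral.integral_lt_integral_of_continuousOn_of_le_of_exists_lt
                two_pi_pos hWc continuousOn_const
                (fun θ hθ => hWlem _ (hcirclemem θ)) ⟨φ₀, hφ₀mem, hφ₀lt⟩
              rw [intervalIntegral.integral_const, smul_eq_mul, sub_zero] at hintlt
              have h6 : m ≤ (2 * Real.pi)⁻¹ * ∫ θ in (0:ℝ)..(2*Real.pi), W (circleMap a t θ) := by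
                have : circleAvg W a t =
                    (2 * Real.pi)⁻¹ * ∫ θ in (0:ℝ)..(2*Real.pi), W (circleMap a t θ) :=
                  circleAvg_eq W a t
                rw [← this]
                exact h4
              have h2π := two_pi_pos
              have h7 : 2*Real.pi * m ≤ ∫ θ in (0:ℝ)..(2*Real.pi), W (circleMap a t θ) := by
                have h8 := mul_le_mul_of_nonneg_left h6 h2π.le
                rwa [← mul_assoc, mul_inv_cancel₀ h2π.ne', one_mul] at h8
              linarith
            obtain ⟨φ', hφ'mem, hφ'eq⟩ := exists_circleMap_eq ht0 htdef.symm
            refine ⟨hwball, ?_⟩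
            rw [Set.mem_preimage, Set.mem_singleton_iff, ← hφ'eq]
            exact h5 φ' hφ'mem
        exact Filter.mem_of_superset (ball_mem_nhds a hε'pos) hsubA
      have hpc : IsPreconnected (ball z₀ s) := (convex_ball z₀ s).isPreconnected
      rcases hpc.subset_or_subset hAopen hBopen hdisj hABcov with hA | hB
      · -- W ≡ m on the ball : contradiction at the boundary
        set wseq : ℕ → ℂ := fun k => z₀ + ((s - s * (1/((k:ℝ)+1)) : ℝ) : ℂ) with hwseqdef
        have habs_eq : ∀ k : ℕ, ‖wseq k - z₀‖ = s - s * (1/((k:ℝ)+1)) := by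
          intro k
          rw [hwseqdef]
          dsimp only
          rw [add_sub_cancel_left, Complex.norm_real, Real.norm_eq_abs]
          have hk1 : (0:ℝ) < (k:ℝ) + 1 := by positivity
          have h1 : s * (1/((k:ℝ)+1)) ≤ s * 1 := by
            apply mul_le_mul_of_nonneg_left _ hs.le
            rw [div_le_one hk1]
            linarith
          rw [_root_.abs_of_nonneg]
          linarith
        have hwmem : ∀ k, wseq k ∈ ball z₀ s := by
          intro k
          rw [mem_ball, Complex.dist_eq, habs_eq k]
          have hk1 : (0:ℝ) < (k:ℝ) + 1 := by positivity
          have : 0 < s * (1/((k:ℝ)+1)) := by positivity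
          linarith
        have habst : Tendsto (fun k => ‖wseq k - z₀‖) atTop (𝓝 s) := by
          have h1 : Tendsto (fun k : ℕ => s - s * (1/((k:ℝ)+1))) atTop (𝓝 (s - s * 0)) :=
            tendsto_const_nhds.sub (tendsto_one_div_add_atTop_nhds_zero_nat.const_mul s)
          have h2 : Tendsto (fun k : ℕ => s - s * (1/((k:ℝ)+1))) atTop (𝓝 s) := by
            simpa using h1
          exact h2.congr (fun k => (habs_eq k).symm)
        have h0 := hbdry wseq hwmem habst
        have hconst : ∀ k, W (wseq k) = m := fun k => (hA (hwmem k)).2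
        have : m = 0 := tendsto_nhds_unique (tendsto_const_nhds.congr
          (fun k => (hconst k).symm)) h0
        linarith
      · -- ql would be in B : contradiction
        exact (hB hqlb).2 hWql
  -- conclusion
  have hfinal : W z₀ ≤ m := hWlem _ (mem_ball_self hs)
  have hvG : v z₀ ≤ G z₀ := by
    rw [hWdef] at hfinal
    dsimp only at hfinal
    linarith
  calc v z₀ ≤ G z₀ := hvG
    _ = circleAvg v z₀ s := harmExt_center hs

end Main

end RMVP

/-- properties of the auxiliary function `v`, for the unit
disk: if `u : D → ℝ` is bounded, continuous and satisfies the restricted mean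
value property on circles of radius `ρ(z) ≤ κ(1-|z|)` with `0 < κ < 1`, then
(a) the supremum defining `v` is attained at every `z ∈ D`; (b) `u ≤ v` on
`D`; (c) `v` is bounded on `D`; (d) `v` is continuous on `D`; and (e) `v`
satisfies the sub-mean value property on every circle whose closed disk lies
in `D` (i.e. `v` is subharmonic in `D`). -/
theorem aux_function_v_properties (κ : ℝ) (hκ0 : 0 < κ) (hκ1 : κ < 1) (u : ℂ → ℝ)
    (hbd : ∃ M : ℝ, ∀ z ∈ unitDisk, |u z| ≤ M)
    (hcont : ContinuousOn u unitDisk)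
    (hrmvp : ∀ z ∈ unitDisk, ∃ ρ : ℝ, 0 < ρ ∧ ρ ≤ κ * (1 - ‖z‖) ∧
      u z = circleAvg u z ρ) :
    (∀ z ∈ unitDisk, ∃ p ∈ admissiblePairs u κ z, vFun u κ z = harmExt u p.1 p.2 z) ∧
    (∀ z ∈ unitDisk, u z ≤ vFun u κ z) ∧
    (∃ M : ℝ, ∀ z ∈ unitDisk, |vFun u κ z| ≤ M) ∧
    ContinuousOn (vFun u κ) unitDisk ∧
    (∀ z ∈ unitDisk, ∀ s : ℝ, 0 < s → Metric.closedBall z s ⊆ unitDisk →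
      vFun u κ z ≤ circleAvg (vFun u κ) z s) := by
  obtain ⟨M, hM⟩ := hbd
  refine ⟨?_, ?_, ?_, ?_, ?_⟩
  · intro z hz
    exact RMVP.attained hκ0 hκ1 hM hcont hrmvp hz
  · intro z hz
    exact RMVP.u_le_vFun hκ1 hM hcont hrmvp hz
  · exact ⟨M, fun z hz => RMVP.abs_vFun_le hκ1 hM hcont hrmvp hz⟩
  · exact RMVP.vFun_continuousOn hκ0 hκ1 hM hcont hrmvp
  · intro z hz s hs hsub
    exact RMVP.vFun_global_submean hκ0 hκ1 hM hcont hrmvp hz hs hsub
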